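/- arXiv:1903.11576 — 5 statements merged into one kernel-verified Lean document; each statement's English description precedes it below -/
import Mathlib

section
/- Let H : ℝ^n → ℝ be differentiable with L-Lipschitz gradient, f : ℝ^n → ℝ convex, and t > 0 with t ≤ 1/L. Let A be a point, T a linear subspace, and D the minimizer over T of the strongly convex function D ↦ ⟨∇H(A), D⟩ + (1/(2t))‖D‖² + f(A + D). Then for all α ∈ [0,1], H(A + αD) + f(A + αD) ≤ H(A) + f(A) − (α/(2t))‖D‖². -/
open RealInnerProductSpace

theorem stmt_1 {n : ℕ} (H f : EuclideanSpace ℝ (Fin n) → ℝ)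
    (gradH : EuclideanSpace ℝ (Fin n) → EuclideanSpace ℝ (Fin n))
    (hH : ∀ x, HasGradientAt H (gradH x) x)
    (L : ℝ) (hL : 0 < L)
    (hLip : ∀ x y, ‖gradH x - gradH y‖ ≤ L * ‖x - y‖)
    (hf : ConvexOn ℝ Set.univ f)
    (t : ℝ) (ht : 0 < t) (htL : t ≤ 1 / L)
    (A : EuclideanSpace ℝ (Fin n))
    (T : Submodule ℝ (EuclideanSpace ℝ (Fin n)))
    (D : EuclideanSpace ℝ (Fin n)) (hDT : D ∈ T)
    (hmin : ∀ D' ∈ T,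
      (inner ℝ (gradH A) (D) : ℝ) + 1 / (2 * t) * ‖D‖ ^ 2 + f (A + D) ≤
        (inner ℝ (gradH A) (D') : ℝ) + 1 / (2 * t) * ‖D'‖ ^ 2 + f (A + D')) :
    ∀ α : ℝ, α ∈ Set.Icc (0 : ℝ) 1 →
      H (A + α • D) + f (A + α • D) ≤ H A + f A - α / (2 * t) * ‖D‖ ^ 2 := by
  set c : ℝ := ‖D‖ ^ 2 with hc_def
  have hc : 0 ≤ c := sq_nonneg _
  -- derivative of the curve
  have hcurve : ∀ τ : ℝ, HasDerivAt (fun τ : ℝ => A + τ • D) D τ := by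
    intro τ
    simpa using ((hasDerivAt_id τ).smul_const D).const_add A
  have hHcomp : ∀ τ : ℝ, HasDerivAt (fun τ : ℝ => H (A + τ • D))
      (inner ℝ (gradH (A + τ • D)) D : ℝ) τ := by
    intro τ
    have h1 := (hH (A + τ • D)).hasFDerivAt.comp_hasDerivAt τ (hcurve τ)
    simpa [InnerProductSpace.toDual_apply_apply, Function.comp_def] using h1
  set φ : ℝ → ℝ := fun τ => H (A + τ • D) - τ * (inner ℝ (gradH A) D : ℝ) - L / 2 * τ ^ 2 * c
    with hφ_def
  have hφ : ∀ τ : ℝ, HasDerivAt φ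
      ((inner ℝ (gradH (A + τ • D)) D : ℝ) - (inner ℝ (gradH A) D : ℝ) - L * τ * c) τ := by
    intro τ
    have h2 : HasDerivAt (fun τ : ℝ => τ * (inner ℝ (gradH A) D : ℝ))
        (inner ℝ (gradH A) D : ℝ) τ := by
      simpa using (hasDerivAt_id τ).mul_const (inner ℝ (gradH A) D : ℝ)
    have h3 : HasDerivAt (fun τ : ℝ => L / 2 * τ ^ 2 * c) (L * τ * c) τ := by
      have := ((hasDerivAt_pow 2 τ).const_mul (L / 2)).mul_const c
      exact this.congr_deriv (by rw [show (2:ℕ) - 1 = 1 from rfl]; ring)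
    exact ((hHcomp τ).sub h2).sub h3
  have hanti : AntitoneOn φ (Set.Icc (0 : ℝ) 1) := by
    apply antitoneOn_of_deriv_nonpos (convex_Icc 0 1)
    · exact fun τ _ => (hφ τ).continuousAt.continuousWithinAt
    · exact fun τ _ => (hφ τ).differentiableAt.differentiableWithinAt
    · intro x hx
      rw [interior_Icc] at hx
      rw [(hφ x).deriv]
      have hinner := real_inner_le_norm (gradH (A + x • D) - gradH A) D
      rw [inner_sub_left] at hinner
      have hlip := hLip (A + x • D) A
      have hsub : A + x • D - A = x • D := by abel
      rw [hsub] at hlip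
      have hnsm : ‖x • D‖ = x * ‖D‖ := by
        rw [norm_smul, Real.norm_eq_abs, abs_of_pos hx.1]
      rw [hnsm] at hlip
      have hnn := norm_nonneg D
      have hmul := mul_le_mul_of_nonneg_right hlip hnn
      have hcc : L * x * c = L * (x * ‖D‖) * ‖D‖ := by rw [hc_def]; ring
      linarith [hinner, hmul]
  -- descent lemma
  have hdesc : ∀ α : ℝ, α ∈ Set.Icc (0 : ℝ) 1 →
      H (A + α • D) ≤ H A + α * (inner ℝ (gradH A) D : ℝ) + L / 2 * α ^ 2 * c := by
    intro α hα
    have h0 : (0 : ℝ) ∈ Set.Icc (0 : ℝ) 1 := by constructor <;> norm_num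
    have := hanti h0 hα hα.1
    have hφ0 : φ 0 = H A := by simp [hφ_def]
    rw [hφ0] at this
    simp only [hφ_def] at this
    linarith
  -- convexity combination
  have hconv : ∀ β : ℝ, 0 ≤ β → β ≤ 1 →
      f (A + β • D) ≤ (1 - β) * f A + β * f (A + D) := by
    intro β h0 h1
    have key : (1 - β) • A + β • (A + D) = A + β • D := by module
    have := hf.2 (Set.mem_univ A) (Set.mem_univ (A + D)) (by linarith : (0:ℝ) ≤ 1 - β) h0
      (by ring)
    rw [key] at this
    simpa [smul_eq_mul] using this
  set K : ℝ := (inner ℝ (gradH A) D : ℝ) + f (A + D) - f A with hK_def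
  -- step: K ≤ -((1+β) * (1/(2t)) * c) for β ∈ [0,1)
  have hstep : ∀ β : ℝ, 0 ≤ β → β < 1 → K ≤ -((1 + β) * (1 / (2 * t)) * c) := by
    intro β hβ0 hβ1
    have hm := hmin (β • D) (T.smul_mem β hDT)
    rw [real_inner_smul_right] at hm
    have hns : ‖β • D‖ ^ 2 = β ^ 2 * c := by
      rw [norm_smul, Real.norm_eq_abs, mul_pow, sq_abs, hc_def]
    rw [hns] at hm
    have hcv := hconv β hβ0 hβ1.le
    have h6 : (1 - β) * K ≤ (1 - β) * (-((1 + β) * (1 / (2 * t)) * c)) := by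
      nlinarith [hm, hcv]
    exact le_of_mul_le_mul_left h6 (by linarith)
  have hK : K ≤ -(2 * (1 / (2 * t)) * c) := by
    rcases eq_or_lt_of_le hc with hc0 | hc0
    · have := hstep 0 le_rfl one_pos
      rw [← hc0] at this ⊢
      simpa using this
    · apply le_of_forall_pos_le_add
      intro ε hε
      set s : ℝ := 1 / (2 * t) with hs_def
      have hs : 0 < s := by positivity
      have hsc : 0 < s * c := mul_pos hs hc0
      set β : ℝ := max 0 (1 - ε / (s * c)) with hβ_def
      have hβ0 : 0 ≤ β := le_max_left _ _
      have hβ1 : β < 1 := by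
        apply max_lt one_pos
        have : 0 < ε / (s * c) := div_pos hε hsc
        linarith
      have hβge : 1 - ε / (s * c) ≤ β := le_max_right _ _
      have hβmul : (1 - β) * (s * c) ≤ ε := by
        have h1 : 1 - β ≤ ε / (s * c) := by linarith
        have := mul_le_mul_of_nonneg_right h1 hsc.le
        rwa [div_mul_cancel₀ ε hsc.ne'] at this
      have := hstep β hβ0 hβ1
      nlinarith [this, hβmul]
  -- final combination
  intro α hα
  obtain ⟨hα0, hα1⟩ := hα
  have h1 := hdesc α ⟨hα0, hα1⟩
  have h2 := hconv α hα0 hα1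
  have hL' : L ≤ 1 / t := by
    rw [le_div_iff₀ ht]
    have := (le_div_iff₀ hL).mp htL
    linarith
  have h3 := mul_le_mul_of_nonneg_left hK hα0
  rw [hK_def] at h3
  have hL'' : L ≤ 2 * (1 / (2 * t)) := by
    have h2t : (2:ℝ) * (1 / (2 * t)) = 1 / t := by field_simp
    linarith
  have h4 := mul_le_mul_of_nonneg_right hL'' (mul_nonneg (sq_nonneg α) hc)
  have h5 : 0 ≤ (1 / (2 * t)) * (α * (1 - α) * c) :=
    mul_nonneg (by positivity) (mul_nonneg (mul_nonneg hα0 (by linarith)) hc)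
  have hrw : α / (2 * t) * c = α * (1 / (2 * t)) * c := by ring
  rw [hrw]
  nlinarith [h1, h2, h3, h4, h5]
end

section
/- With the notation of the previous lemma, the minimizer D of ⟨∇H(A), D⟩ + (1/(2t))‖D‖² + f(A+D) over the subspace T satisfies ⟨∇H(A), D⟩ + (1/t)‖D‖² + f(A+D) − f(A) ≤ 0. -/
open RealInnerProductSpace

theorem stmt_2 {n : ℕ} (H f : EuclideanSpace ℝ (Fin n) → ℝ)
    (gradH : EuclideanSpace ℝ (Fin n) → EuclideanSpace ℝ (Fin n))
    (hH : ∀ x, HasGradientAt H (gradH x) x)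
    (hf : ConvexOn ℝ Set.univ f)
    (t : ℝ) (ht : 0 < t)
    (A : EuclideanSpace ℝ (Fin n))
    (T : Submodule ℝ (EuclideanSpace ℝ (Fin n)))
    (D : EuclideanSpace ℝ (Fin n)) (hDT : D ∈ T)
    (hmin : ∀ D' ∈ T,
      (inner ℝ (gradH A) (D) : ℝ) + 1 / (2 * t) * ‖D‖ ^ 2 + f (A + D) ≤
        (inner ℝ (gradH A) (D') : ℝ) + 1 / (2 * t) * ‖D'‖ ^ 2 + f (A + D')) :
    (inner ℝ (gradH A) (D) : ℝ) + 1 / t * ‖D‖ ^ 2 + f (A + D) - f A ≤ 0 := by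
  have hN0 : (0:ℝ) ≤ ‖D‖ ^ 2 := by positivity
  have key : ∀ α : ℝ, 0 ≤ α → α < 1 →
      2 * t * ((inner ℝ (gradH A) D : ℝ) + f (A + D) - f A) ≤ -(1 + α) * ‖D‖ ^ 2 := by
    intro α h0 h1
    have h1' : (0:ℝ) < 1 - α := by linarith
    have h2 := hmin (α • D) (T.smul_mem α hDT)
    rw [real_inner_smul_right, norm_smul, Real.norm_eq_abs, abs_of_nonneg h0] at h2
    have hcomb : α • (A + D) + (1 - α) • A = A + α • D := by module
    have hconv : f (A + α • D) ≤ α * f (A + D) + (1 - α) * f A := by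
      have := hf.2 (Set.mem_univ (A + D)) (Set.mem_univ A) h0 h1'.le (by ring)
      rw [hcomb, smul_eq_mul, smul_eq_mul] at this
      linarith
    -- multiply h2 by 2t to clear the 1/(2t)
    have h2' := mul_le_mul_of_nonneg_left h2 (by positivity : (0:ℝ) ≤ 2 * t)
    have hinv : 2 * t * (1 / (2 * t)) = 1 := by field_simp
    refine le_of_mul_le_mul_left ?_ h1'
    have p1 := mul_le_mul_of_nonneg_left h2' h1'.le
    have p2 := mul_le_mul_of_nonneg_left hconv (by positivity : (0:ℝ) ≤ (1 - α) * (2 * t))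
    nlinarith [p1, p2, sq_nonneg (α * ‖D‖)]
  have main : 2 * t * ((inner ℝ (gradH A) D : ℝ) + f (A + D) - f A) ≤ -2 * ‖D‖ ^ 2 := by
    refine le_of_forall_pos_le_add ?_
    intro ε hε
    rcases eq_or_lt_of_le hN0 with hN | hN
    · have := key 0 le_rfl one_pos
      rw [← hN] at this ⊢
      linarith
    · have hm1 : (0:ℝ) < min 1 (ε / ‖D‖ ^ 2) := lt_min one_pos (by positivity)
      have hm2 : min 1 (ε / ‖D‖ ^ 2) ≤ 1 := min_le_left _ _
      have hm3 : min 1 (ε / ‖D‖ ^ 2) ≤ ε / ‖D‖ ^ 2 := min_le_right _ _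
      have hk := key (1 - min 1 (ε / ‖D‖ ^ 2)) (by linarith) (by linarith)
      have hfrac : min 1 (ε / ‖D‖ ^ 2) * ‖D‖ ^ 2 ≤ ε := by
        calc min 1 (ε / ‖D‖ ^ 2) * ‖D‖ ^ 2 ≤ (ε / ‖D‖ ^ 2) * ‖D‖ ^ 2 :=
              mul_le_mul_of_nonneg_right hm3 hN0
          _ = ε := div_mul_cancel₀ ε hN.ne'
      nlinarith [hk, hfrac]
  have hti : t * (1 / t) = 1 := by field_simp
  nlinarith [main, hti, ht, mul_pos ht ht]
end

section
/- For the polar retraction R_X(ξ) = (X + ξ)(I_r + ξᵀξ)^{-1/2} on the Stiefel manifold, R_X(0) = X, and for every tangent vector ξ at X one has ‖R_X(ξ) − (X + ξ)‖_F ≤ ‖ξ‖_F² (a second-order retraction bound with constant M₂ = 1). -/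
open Matrix

/-- Frobenius norm of a real matrix. -/
noncomputable def frobNorm {p r : ℕ} (M : Matrix (Fin p) (Fin r) ℝ) : ℝ :=
  Real.sqrt (∑ i, ∑ j, (M i j) ^ 2)

/-- The positive semidefinite square root of a positive semidefinite matrix
(removed from Mathlib; restored with its December 2024 definition). -/
noncomputable def Matrix.PosSemidef.sqrt {n 𝕜 : Type*} [Fintype n] [RCLike 𝕜] [PartialOrder 𝕜] [StarOrderedRing 𝕜]
    [DecidableEq n]
    {A : Matrix n n 𝕜} (hA : A.PosSemidef) : Matrix n n 𝕜 :=
  hA.1.eigenvectorUnitary.1 * diagonal ((↑) ∘ (√·) ∘ hA.1.eigenvalues) *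
    (star hA.1.eigenvectorUnitary : Matrix n n 𝕜)

open scoped MatrixOrder in
lemma Matrix.PosSemidef.eq_sqrt_of_sq_eq {r : ℕ} {C B : Matrix (Fin r) (Fin r) ℝ}
    (hC : C.PosSemidef) (hB : B.PosSemidef) (h : C ^ 2 = B) : C = hB.sqrt := by
  have e1 : hB.sqrt = cfc Real.sqrt B := by
    rw [hB.1.cfc_eq]
    simp [Matrix.IsHermitian.cfc, Matrix.PosSemidef.sqrt, Unitary.conjStarAlgAut_apply]
  have e2 : CFC.sqrt B = C := CFC.sqrt_unique (by rw [← h, pow_two]) hC.nonneg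
  rw [e1, ← cfcₙ_eq_cfc, ← CFC.sqrt_eq_real_sqrt B hB.nonneg, e2]

lemma frobNorm_eq_sqrt_trace {p r : ℕ} (M : Matrix (Fin p) (Fin r) ℝ) :
    frobNorm M = Real.sqrt (Mᵀ * M).trace := by
  unfold frobNorm
  congr 1
  rw [Finset.sum_comm]
  simp [Matrix.trace, Matrix.mul_apply, Matrix.diag, pow_two]

lemma scalar_ineq (a : ℝ) (ha : 0 ≤ a) :
    ((Real.sqrt (1+a))⁻¹ - 1)^2 * (1+a) ≤ a^2 := by
  set s := Real.sqrt (1+a) with hs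
  have hs0 : 0 < s := Real.sqrt_pos.mpr (by linarith)
  have hs2 : s^2 = 1 + a := Real.sq_sqrt (by linarith)
  have hs1 : 1 ≤ s := by nlinarith
  have key : (s⁻¹ - 1)^2 * (1+a) = (1 - s)^2 := by
    rw [← hs2]; field_simp
  rw [key]; nlinarith

theorem stmt_6 (p r : ℕ) (X ξ : Matrix (Fin p) (Fin r) ℝ)
    (hX : Xᵀ * X = 1) (hξ : ξᵀ * X + Xᵀ * ξ = 0)
    (hP : ((1 + ξᵀ * ξ)⁻¹).PosSemidef) :
    (ξ = 0 → (X + ξ) * hP.sqrt = X) ∧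
      frobNorm ((X + ξ) * hP.sqrt - (X + ξ)) ≤ (frobNorm ξ) ^ 2 := by
  have hA : (ξᵀ * ξ).PosSemidef := by
    simpa [Matrix.conjTranspose_eq_transpose_of_trivial] using
      Matrix.posSemidef_conjTranspose_mul_self ξ
  set A := ξᵀ * ξ with hAdef
  have hH : A.IsHermitian := hA.1
  set U : Matrix (Fin r) (Fin r) ℝ := (hH.eigenvectorUnitary : Matrix (Fin r) (Fin r) ℝ)
    with hUdef
  set d : Fin r → ℝ := hH.eigenvalues with hddef
  have hd0 : ∀ i, 0 ≤ d i := fun i => hA.eigenvalues_nonneg i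
  have hUU : star U * U = 1 := Matrix.mem_unitaryGroup_iff'.mp hH.eigenvectorUnitary.2
  have hUU' : U * star U = 1 := Matrix.mem_unitaryGroup_iff.mp hH.eigenvectorUnitary.2
  have hspec : A = U * diagonal d * star U := by
    have := hH.spectral_theorem
    simpa [RCLike.ofReal_real_eq_id] using this
  -- conjugation multiplication
  have hconjmul : ∀ f g : Fin r → ℝ,
      (U * diagonal f * star U) * (U * diagonal g * star U)
        = U * diagonal (fun i => f i * g i) * star U := by
    intro f g
    simp only [Matrix.mul_assoc]
    rw [← Matrix.mul_assoc (star U) U, hUU, Matrix.one_mul,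
      ← Matrix.mul_assoc (diagonal f) (diagonal g), Matrix.diagonal_mul_diagonal]
  have hone : (1 : Matrix (Fin r) (Fin r) ℝ) = U * diagonal (fun _ => 1) * star U := by
    simpa using hUU'.symm
  have hB : (1 + A) = U * diagonal (fun i => 1 + d i) * star U := by
    rw [hspec]
    conv_lhs => rw [hone]
    rw [← Matrix.add_mul, ← Matrix.mul_add, Matrix.diagonal_add]
  set g : Fin r → ℝ := fun i => (Real.sqrt (1 + d i))⁻¹ with hgdef
  set C : Matrix (Fin r) (Fin r) ℝ := U * diagonal g * star U with hCdef
  have hg0 : ∀ i, 0 ≤ g i := fun i => inv_nonneg.mpr (Real.sqrt_nonneg _)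
  have hCpsd : C.PosSemidef := by
    have h1 : (diagonal g).PosSemidef := Matrix.posSemidef_diagonal_iff.mpr hg0
    have := h1.mul_mul_conjTranspose_same U
    simpa [Matrix.conjTranspose_eq_transpose_of_trivial, hCdef,
      Matrix.star_eq_conjTranspose] using this
  have hd1 : ∀ i, (0:ℝ) < 1 + d i := fun i => by have := hd0 i; linarith
  have hCsq : C ^ 2 = (1 + A)⁻¹ := by
    have h2 : C ^ 2 = U * diagonal (fun i => g i * g i) * star U := by
      rw [pow_two, hCdef, hconjmul]
    have hprod : (1 + A) * C ^ 2 = 1 := by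
      rw [h2, hB, hconjmul]
      have heq : (fun i => (1 + d i) * (g i * g i)) = fun _ => (1 : ℝ) := by
        funext i
        have hgg : g i * g i = ((1:ℝ) + d i)⁻¹ := by
          rw [hgdef]
          rw [← mul_inv, Real.mul_self_sqrt (hd1 i).le]
        rw [hgg, mul_inv_cancel₀ (hd1 i).ne']
      rw [heq, ← hone]
    exact (Matrix.inv_eq_right_inv hprod).symm
  have hCsqrt : C = hP.sqrt := hCpsd.eq_sqrt_of_sq_eq hP hCsq
  constructor
  · intro h0
    subst h0
    have h1 : ((1 : Matrix (Fin r) (Fin r) ℝ)).PosSemidef := Matrix.PosSemidef.one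
    have heq : (1 : Matrix (Fin r) (Fin r) ℝ) = hP.sqrt := by
      apply h1.eq_sqrt_of_sq_eq
      simp [hAdef]
    rw [← heq]
    simp
  · -- main bound
    set M := (X + ξ) * hP.sqrt - (X + ξ) with hMdef
    have hXX : (X + ξ)ᵀ * (X + ξ) = 1 + A := by
      rw [Matrix.transpose_add, Matrix.add_mul, Matrix.mul_add, Matrix.mul_add, hX]
      have h2 : Xᵀ * ξ + ξᵀ * X = 0 := by rw [add_comm]; exact hξ
      calc 1 + Xᵀ * ξ + (ξᵀ * X + ξᵀ * ξ) = 1 + (Xᵀ * ξ + ξᵀ * X) + ξᵀ * ξ := by abel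
        _ = 1 + A := by rw [h2, add_zero, hAdef]
    have hMeq : M = (X + ξ) * (C - 1) := by
      rw [hMdef, ← hCsqrt, Matrix.mul_sub, Matrix.mul_one]
    have hCsym : (C - 1)ᵀ = C - 1 := by
      have h1 := hCpsd.1
      rw [Matrix.IsHermitian, Matrix.conjTranspose_eq_transpose_of_trivial] at h1
      rw [Matrix.transpose_sub, Matrix.transpose_one, h1]
    have hC1 : C - 1 = U * diagonal (fun i => g i - 1) * star U := by
      rw [hCdef]
      conv_lhs => rw [hone]
      rw [← Matrix.sub_mul, ← Matrix.mul_sub, Matrix.diagonal_sub]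
    have hMtM : Mᵀ * M = U * diagonal (fun i => (g i - 1) * ((1 + d i) * (g i - 1)))
        * star U := by
      have step : Mᵀ * M = (C - 1) * ((1 + A) * (C - 1)) := by
        rw [hMeq, Matrix.transpose_mul, hCsym]
        simp only [Matrix.mul_assoc]
        rw [← Matrix.mul_assoc ((X + ξ)ᵀ) (X + ξ), hXX]
      rw [step, hC1, hB, hconjmul, hconjmul]
    have htrace : (Mᵀ * M).trace = ∑ i, (g i - 1)^2 * (1 + d i) := by
      rw [hMtM, Matrix.trace_mul_cycle, hUU, Matrix.one_mul,
        Matrix.trace_diagonal]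
      exact Finset.sum_congr rfl fun i _ => by ring
    have htrA : A.trace = ∑ i, d i := by
      rw [hspec, Matrix.trace_mul_cycle, hUU, Matrix.one_mul,
        Matrix.trace_diagonal]
    have hfrobξ : (frobNorm ξ)^2 = ∑ i, d i := by
      rw [frobNorm_eq_sqrt_trace, ← hAdef, htrA, Real.sq_sqrt]
      exact Finset.sum_nonneg fun i _ => hd0 i
    rw [frobNorm_eq_sqrt_trace, htrace, hfrobξ]
    have hle : ∑ i, (g i - 1)^2 * (1 + d i) ≤ (∑ i, d i)^2 := by
      calc ∑ i, (g i - 1)^2 * (1 + d i) ≤ ∑ i, (d i)^2 :=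
            Finset.sum_le_sum fun i _ => scalar_ineq (d i) (hd0 i)
        _ ≤ (∑ i, d i)^2 := Finset.sum_sq_le_sq_sum_of_nonneg fun i _ => hd0 i
    calc Real.sqrt (∑ i, (g i - 1)^2 * (1 + d i)) ≤ Real.sqrt ((∑ i, d i)^2) :=
          Real.sqrt_le_sqrt hle
      _ = ∑ i, d i := Real.sqrt_sq (Finset.sum_nonneg fun i _ => hd0 i)
end

section
/- The map E(Λ) = D(Λ)ᵀ M A + Aᵀ M D(Λ), where D(Λ) = prox_{tf}(A − t∇h(A) + 2tMAΛ) − A, is monotone on symmetric matrices: ⟨E(Λ₁) − E(Λ₂), Λ₁ − Λ₂⟩ ≥ 0 for all symmetric Λ₁, Λ₂ ∈ ℝ^{r×r}. -/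
open Matrix

lemma sum_mul_eq_trace {m n : ℕ} (X Y : Matrix (Fin m) (Fin n) ℝ) :
    ∑ a, ∑ b, X a b * Y a b = Matrix.trace (X * Yᵀ) := by
  simp [Matrix.trace, Matrix.mul_apply, Matrix.diag]

theorem stmt_14 (p r : ℕ) (f : Matrix (Fin p) (Fin r) ℝ → ℝ)
    (hf : ConvexOn ℝ Set.univ f) (t : ℝ) (ht : 0 < t)
    (M : Matrix (Fin p) (Fin p) ℝ) (hM : Mᵀ = M)
    (A gradhA : Matrix (Fin p) (Fin r) ℝ)
    (prox : Matrix (Fin p) (Fin r) ℝ → Matrix (Fin p) (Fin r) ℝ)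
    (hprox : ∀ B Z, (1 / 2) * (∑ j, ∑ i, (prox B j i - B j i) ^ 2) + t * f (prox B) ≤
      (1 / 2) * (∑ j, ∑ i, (Z j i - B j i) ^ 2) + t * f Z) :
    ∀ Λ₁ Λ₂ : Matrix (Fin r) (Fin r) ℝ, Λ₁ᵀ = Λ₁ → Λ₂ᵀ = Λ₂ →
      let D := fun Λ : Matrix (Fin r) (Fin r) ℝ =>
        prox (A - t • gradhA + (2 * t) • (M * A * Λ)) - A
      let E := fun Λ : Matrix (Fin r) (Fin r) ℝ => (D Λ)ᵀ * M * A + Aᵀ * M * (D Λ)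
      0 ≤ ∑ a, ∑ b, (E Λ₁ - E Λ₂) a b * (Λ₁ - Λ₂) a b := by
  intro Λ₁ Λ₂ hΛ₁ hΛ₂ D E
  set B₁ := A - t • gradhA + (2 * t) • (M * A * Λ₁) with hB₁
  set B₂ := A - t • gradhA + (2 * t) • (M * A * Λ₂) with hB₂
  set P₁ := prox B₁ with hP₁
  set P₂ := prox B₂ with hP₂
  set Δ := Λ₁ - Λ₂ with hΔdef
  have hΔ : Δᵀ = Δ := by rw [hΔdef, transpose_sub, hΛ₁, hΛ₂]
  -- monotonicity of prox
  have key : 0 ≤ ∑ a, ∑ b, (P₁ - P₂) a b * (B₁ - B₂) a b := by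
    have h1 := hprox B₁ P₂
    have h2 := hprox B₂ P₁
    have hsum : ∑ a, ∑ b, (P₁ - P₂) a b * (B₁ - B₂) a b
        = (1/2) * ((∑ j, ∑ i, (P₂ j i - B₁ j i) ^ 2) + (∑ j, ∑ i, (P₁ j i - B₂ j i) ^ 2)
          - (∑ j, ∑ i, (P₁ j i - B₁ j i) ^ 2) - (∑ j, ∑ i, (P₂ j i - B₂ j i) ^ 2)) := by
      rw [← Finset.sum_add_distrib, ← Finset.sum_sub_distrib, ← Finset.sum_sub_distrib,
        Finset.mul_sum]
      refine Finset.sum_congr rfl fun a _ => ?_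
      rw [← Finset.sum_add_distrib, ← Finset.sum_sub_distrib, ← Finset.sum_sub_distrib,
        Finset.mul_sum]
      refine Finset.sum_congr rfl fun b _ => ?_
      simp only [Matrix.sub_apply]
      ring
    rw [hsum]
    linarith
  have hBdiff : B₁ - B₂ = (2 * t) • (M * A * Δ) := by
    rw [hB₁, hB₂, hΔdef, Matrix.mul_sub, smul_sub]
    abel
  -- trace computations
  have key' : 0 ≤ (2 * t) * Matrix.trace ((P₁ - P₂) * (Δ * (Aᵀ * M))) := by
    rw [sum_mul_eq_trace, hBdiff] at key
    have : ((2 * t) • (M * A * Δ))ᵀ = (2 * t) • (Δ * (Aᵀ * M)) := by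
      rw [transpose_smul, transpose_mul, transpose_mul, hM, hΔ]
    rw [this, Matrix.mul_smul, trace_smul, smul_eq_mul] at key
    exact key
  have htr : 0 ≤ Matrix.trace ((P₁ - P₂) * (Δ * (Aᵀ * M))) := by
    nlinarith
  have hE : E Λ₁ - E Λ₂ = (P₁ - P₂)ᵀ * M * A + Aᵀ * M * (P₁ - P₂) := by
    show ((P₁ - A)ᵀ * M * A + Aᵀ * M * (P₁ - A)) - ((P₂ - A)ᵀ * M * A + Aᵀ * M * (P₂ - A))
        = (P₁ - P₂)ᵀ * M * A + Aᵀ * M * (P₁ - P₂)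
    simp only [transpose_sub, Matrix.sub_mul, Matrix.mul_sub]
    abel
  rw [sum_mul_eq_trace, hE, hΔ, Matrix.add_mul, trace_add]
  have e1 : Matrix.trace ((P₁ - P₂)ᵀ * M * A * Δ)
      = Matrix.trace ((P₁ - P₂) * (Δ * (Aᵀ * M))) := by
    rw [← trace_transpose ((P₁ - P₂)ᵀ * M * A * Δ)]
    rw [transpose_mul, transpose_mul, transpose_mul, transpose_transpose, hM, hΔ]
    rw [trace_mul_comm (P₁ - P₂) (Δ * (Aᵀ * M))]
    simp only [Matrix.mul_assoc]
  have e2 : Matrix.trace (Aᵀ * M * (P₁ - P₂) * Δ)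
      = Matrix.trace ((P₁ - P₂) * (Δ * (Aᵀ * M))) := by
    rw [trace_mul_comm (Aᵀ * M * (P₁ - P₂)) Δ, trace_mul_comm (P₁ - P₂) (Δ * (Aᵀ * M))]
    simp only [Matrix.mul_assoc]
  rw [e1, e2]
  linarith
end

section
/- Let h be differentiable with L-Lipschitz gradient on ℝ^n, f convex and L_f-Lipschitz, M a compact submanifold with retraction R satisfying ‖R_X(ξ) − X‖ ≤ M₁‖ξ‖ and ‖R_X(ξ) − (X+ξ)‖ ≤ M₂‖ξ‖², and suppose ‖∇h(X)‖ ≤ G_b on M. If D ∈ T_X M satisfies ⟨∇h(X), D⟩ + (1/t)‖D‖² + f(X+D) − f(X) ≤ 0, then for X⁺ = R_X(αD) with α ∈ (0,1]: h(X⁺) + f(X⁺) − h(X) − f(X) ≤ ((M₂G_b + L M₁²/2 + L_f M₂)α² − α/t)‖D‖². -/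
set_option maxHeartbeats 1000000

lemma descent_lemma {n : ℕ} (h : EuclideanSpace ℝ (Fin n) → ℝ)
    (g : EuclideanSpace ℝ (Fin n) → EuclideanSpace ℝ (Fin n))
    (hgrad : ∀ x, HasGradientAt h (g x) x)
    (L : ℝ) (hL : 0 ≤ L) (hLip : ∀ x y, ‖g x - g y‖ ≤ L * ‖x - y‖)
    (x y : EuclideanSpace ℝ (Fin n)) :
    h y ≤ h x + inner ℝ (g x) (y - x) + L / 2 * ‖y - x‖ ^ 2 := by
  set v := y - x with hv
  have hgc : Continuous g := by
    have : LipschitzWith ⟨L, hL⟩ g := by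
      apply LipschitzWith.of_dist_le_mul
      intro a b
      rw [dist_eq_norm, dist_eq_norm]
      exact hLip a b
    exact this.continuous
  have hlinec : Continuous (fun s : ℝ => x + s • v) :=
    continuous_const.add (continuous_id.smul continuous_const)
  have key : ∀ s : ℝ, HasDerivAt (fun s : ℝ => h (x + s • v))
      (inner ℝ (g (x + s • v)) v : ℝ) s := by
    intro s
    have hline : HasDerivAt (fun s : ℝ => x + s • v) v s := by
      simpa using ((hasDerivAt_id s).smul_const v).const_add x
    have hF := ((hgrad (x + s • v)).hasFDerivAt).comp_hasDerivAt s hline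
    simp at hF
    exact hF
  have hcont : Continuous (fun s : ℝ => (inner ℝ (g (x + s • v)) v : ℝ)) :=
    (hgc.comp hlinec).inner continuous_const
  have hbcont : Continuous (fun s : ℝ => (inner ℝ (g x) v : ℝ) + L * ‖v‖ ^ 2 * s) :=
    continuous_const.add (continuous_const.mul continuous_id)
  have hint : ∫ s in (0:ℝ)..1, (inner ℝ (g (x + s • v)) v : ℝ) = h y - h x := by
    rw [intervalIntegral.integral_eq_sub_of_hasDerivAt (fun s _ => key s)
      (hcont.intervalIntegrable 0 1)]
    simp [hv]
  have hbound : ∫ s in (0:ℝ)..1, (inner ℝ (g (x + s • v)) v : ℝ)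
      ≤ ∫ s in (0:ℝ)..1, ((inner ℝ (g x) v : ℝ) + L * ‖v‖ ^ 2 * s) := by
    apply intervalIntegral.integral_mono_on (by norm_num)
      (hcont.intervalIntegrable 0 1) (hbcont.intervalIntegrable 0 1)
    intro s hs
    have h1 : (inner ℝ (g (x + s • v)) v : ℝ) - inner ℝ (g x) v = inner ℝ (g (x + s • v) - g x) v := by
      rw [inner_sub_left]
    have h2 : (inner ℝ (g (x + s • v) - g x) v : ℝ) ≤ ‖g (x + s • v) - g x‖ * ‖v‖ :=
      real_inner_le_norm _ _
    have h3 : ‖g (x + s • v) - g x‖ ≤ L * (s * ‖v‖) := by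
      have := hLip (x + s • v) x
      simpa [norm_smul, abs_of_nonneg hs.1] using this
    nlinarith [norm_nonneg v, norm_nonneg (g (x + s • v) - g x), hs.1]
  have hval : ∫ s in (0:ℝ)..1, ((inner ℝ (g x) v : ℝ) + L * ‖v‖ ^ 2 * s)
      = inner ℝ (g x) v + L / 2 * ‖v‖ ^ 2 := by
    rw [intervalIntegral.integral_add intervalIntegrable_const
      ((continuous_const.mul continuous_id').intervalIntegrable 0 1 (u := fun s : ℝ => L * ‖v‖ ^ 2 * s)),
      intervalIntegral.integral_const_mul, integral_id]
    simp
    ring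
  linarith [hint ▸ hbound, hval ▸ hbound]

theorem stmt_17 {n : ℕ} (h f : EuclideanSpace ℝ (Fin n) → ℝ)
    (gradh : EuclideanSpace ℝ (Fin n) → EuclideanSpace ℝ (Fin n))
    (hgrad : ∀ x, HasGradientAt h (gradh x) x)
    (L : ℝ) (hL : 0 < L) (hLip : ∀ x y, ‖gradh x - gradh y‖ ≤ L * ‖x - y‖)
    (hf : ConvexOn ℝ Set.univ f)
    (Lf : ℝ) (hLf : 0 < Lf) (hfLip : ∀ x y, |f x - f y| ≤ Lf * ‖x - y‖)
    (t : ℝ) (ht : 0 < t)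
    (M₁ M₂ Gb : ℝ) (hM₁ : 0 < M₁) (hM₂ : 0 < M₂)
    (X D : EuclideanSpace ℝ (Fin n))
    (hGb : ‖gradh X‖ ≤ Gb)
    (hD : (inner ℝ (gradh X) D : ℝ) + 1 / t * ‖D‖ ^ 2 + f (X + D) - f X ≤ 0)
    (α : ℝ) (hα : α ∈ Set.Ioc (0 : ℝ) 1)
    (R : EuclideanSpace ℝ (Fin n) → EuclideanSpace ℝ (Fin n))
    (hR1 : ‖R (α • D) - X‖ ≤ M₁ * ‖α • D‖)
    (hR2 : ‖R (α • D) - (X + α • D)‖ ≤ M₂ * ‖α • D‖ ^ 2) :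
    h (R (α • D)) + f (R (α • D)) - h X - f X ≤
      ((M₂ * Gb + L * M₁ ^ 2 / 2 + Lf * M₂) * α ^ 2 - α / t) * ‖D‖ ^ 2 := by
  obtain ⟨hα0, hα1⟩ := hα
  set Xp := R (α • D) with hXp
  have hnαD : ‖α • D‖ = α * ‖D‖ := by
    rw [norm_smul, Real.norm_eq_abs, abs_of_pos hα0]
  -- descent lemma
  have hdesc : h Xp ≤ h X + inner ℝ (gradh X) (Xp - X) + L / 2 * ‖Xp - X‖ ^ 2 :=
    descent_lemma h gradh hgrad L hL.le hLip X Xp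
  -- split inner product
  have hsplit : (inner ℝ (gradh X) (Xp - X) : ℝ)
      = inner ℝ (gradh X) (α • D) + inner ℝ (gradh X) (Xp - (X + α • D)) := by
    rw [← inner_add_right]; congr 1; abel
  have hGb0 : 0 ≤ Gb := le_trans (norm_nonneg _) hGb
  have h2 : (inner ℝ (gradh X) (Xp - (X + α • D)) : ℝ) ≤ Gb * (M₂ * (α * ‖D‖) ^ 2) := by
    calc (inner ℝ (gradh X) (Xp - (X + α • D)) : ℝ)
        ≤ ‖gradh X‖ * ‖Xp - (X + α • D)‖ := real_inner_le_norm _ _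
      _ ≤ Gb * (M₂ * (α * ‖D‖) ^ 2) := by
          rw [← hnαD]
          exact mul_le_mul hGb hR2 (norm_nonneg _) hGb0
  have h3 : (inner ℝ (gradh X) (α • D) : ℝ) = α * inner ℝ (gradh X) D := by
    rw [real_inner_smul_right]
  have h4 : L / 2 * ‖Xp - X‖ ^ 2 ≤ L / 2 * (M₁ * (α * ‖D‖)) ^ 2 := by
    apply mul_le_mul_of_nonneg_left _ (by linarith)
    rw [← hnαD]
    exact pow_le_pow_left₀ (norm_nonneg _) hR1 2
  -- f part
  have hconv : f (X + α • D) - f X ≤ α * (f (X + D) - f X) := by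
    have := hf.2 (Set.mem_univ X) (Set.mem_univ (X + D)) (by linarith : (0:ℝ) ≤ 1 - α)
      hα0.le (by ring)
    have heq : (1 - α) • X + α • (X + D) = X + α • D := by
      module
    rw [heq] at this
    simp only [smul_eq_mul] at this
    nlinarith [this]
  have h5 : f Xp - f (X + α • D) ≤ Lf * (M₂ * (α * ‖D‖) ^ 2) := by
    calc f Xp - f (X + α • D) ≤ |f Xp - f (X + α • D)| := le_abs_self _
      _ ≤ Lf * ‖Xp - (X + α • D)‖ := hfLip _ _
      _ ≤ Lf * (M₂ * (α * ‖D‖) ^ 2) := by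
          rw [← hnαD]; exact mul_le_mul_of_nonneg_left hR2 hLf.le
  -- combine with hD scaled by α
  have hDα : α * ((inner ℝ (gradh X) D : ℝ) + f (X + D) - f X) ≤ -(α / t) * ‖D‖ ^ 2 := by
    have h6 : (inner ℝ (gradh X) D : ℝ) + f (X + D) - f X ≤ -(1 / t) * ‖D‖ ^ 2 := by
      linarith
    have := mul_le_mul_of_nonneg_left h6 hα0.le
    calc α * ((inner ℝ (gradh X) D : ℝ) + f (X + D) - f X)
        ≤ α * (-(1 / t) * ‖D‖ ^ 2) := this
      _ = -(α / t) * ‖D‖ ^ 2 := by ring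
  nlinarith [hdesc, hsplit, h2, h3, h4, hconv, h5, hDα, sq_nonneg (α * ‖D‖)]
end
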